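/- arXiv:2407.06120 — 2 statements merged into one kernel-verified Lean document; each statement's English description precedes it below -/
import Mathlib

section
/- Let G ∈ R^{N×r} and G_S ∈ R^{n×r} consist of n rows of G, with G_S of full column rank r. Define Σ = (1/N)GᵀG and Σ_S = (1/n)G_SᵀG_S. Suppose Σ ≼ c_S Σ_S in the Loewner order for some c_S > 0. Then tr(Σ Σ_S^{-1}) ≤ c_S r. Consequently, under the noisy linear model y_S = G_Sθ* + z_S with E[z_S] = 0, E[z_S z_Sᵀ] = σ² I_n, and θ_S = G_S^† y_S, the expected excess risk satisfies E[(1/N)‖G(θ_S − θ*)‖₂²] ≤ c_S σ² r / n. -/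
open Matrix MeasureTheory

/-- The Moore–Penrose pseudoinverse characterization: `B` is the pseudoinverse of `A`. -/
def IsMoorePenrose {n m : ℕ} (A : Matrix (Fin n) (Fin m) ℝ) (B : Matrix (Fin m) (Fin n) ℝ) :
    Prop :=
  A * B * A = A ∧ B * A * B = B ∧ (A * B)ᵀ = A * B ∧ (B * A)ᵀ = B * A

section Aux

lemma aux_trace_nonneg {k : ℕ} {A : Matrix (Fin k) (Fin k) ℝ} (hA : A.PosSemidef) :
    0 ≤ A.trace := by
  rw [Matrix.trace]
  refine Finset.sum_nonneg fun i _ => ?_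
  have := hA.dotProduct_mulVec_nonneg (Pi.single i 1)
  simpa [Matrix.mulVec_single, single_dotProduct, Matrix.diag] using this

lemma aux_trace_mul_nonneg {k : ℕ} {A B : Matrix (Fin k) (Fin k) ℝ}
    (hA : A.PosSemidef) (hB : B.PosSemidef) : 0 ≤ (A * B).trace := by
  obtain ⟨Cm, hCm, hCmB⟩ : ∃ Cm : Matrix (Fin k) (Fin k) ℝ, Cm.PosSemidef ∧ Cm * Cm = B :=
    by open scoped MatrixOrder in
      exact ⟨CFC.sqrt B, (CFC.sqrt_nonneg B).posSemidef, CFC.sqrt_mul_sqrt_self B hB.nonneg⟩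
  have h1 : (A * B).trace = (Cm * A * Cm).trace := by
    rw [← hCmB, ← Matrix.mul_assoc, Matrix.trace_mul_comm (A * Cm) Cm, ← Matrix.mul_assoc]
  rw [h1]
  have hps : (Cmᴴ * A * Cm).PosSemidef := hA.conjTranspose_mul_mul_same Cm
  rw [hCm.isHermitian.eq] at hps
  exact aux_trace_nonneg hps

end Aux

/-- moment matching `Σ ≼ c_S Σ_S` gives `tr(Σ Σ_S⁻¹) ≤ c_S r` and hence an
expected excess risk bound `c_S σ² r / n` for min-norm least squares on the subsample. -/
theorem stmt2
    {N n r : ℕ} (hN : 0 < N) (hn : 0 < n)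
    (G : Matrix (Fin N) (Fin r) ℝ) (S : Fin n → Fin N) (hS : Function.Injective S)
    (GS : Matrix (Fin n) (Fin r) ℝ) (hGSdef : GS = G.submatrix S id)
    (hrankGS : GS.rank = r)
    (Sg SgS : Matrix (Fin r) (Fin r) ℝ)
    (hSg : Sg = (N : ℝ)⁻¹ • (Gᵀ * G)) (hSgS : SgS = (n : ℝ)⁻¹ • (GSᵀ * GS))
    (cS : ℝ) (hcS : 0 < cS) (hmm : (cS • SgS - Sg).PosSemidef)
    {Ω : Type} [MeasurableSpace Ω] (μ : Measure Ω) [IsProbabilityMeasure μ]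
    (σ : ℝ) (zS : Ω → Fin n → ℝ)
    (hmean : ∀ i, ∫ ω, zS ω i ∂μ = 0)
    (hint : ∀ i j, Integrable (fun ω => zS ω i * zS ω j) μ)
    (hcov : ∀ i j, ∫ ω, zS ω i * zS ω j ∂μ = if i = j then σ ^ 2 else 0)
    (θstar : Fin r → ℝ)
    (yS : Ω → Fin n → ℝ) (hy : ∀ ω, yS ω = GS.mulVec θstar + zS ω)
    (GSdag : Matrix (Fin r) (Fin n) ℝ) (hdag : IsMoorePenrose GS GSdag)
    (θS : Ω → Fin r → ℝ) (hθS : ∀ ω, θS ω = GSdag.mulVec (yS ω)) :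
    (Sg * SgS⁻¹).trace ≤ cS * r ∧
    ∫ ω, (N : ℝ)⁻¹ * ∑ i, (G.mulVec (θS ω - θstar) i) ^ 2 ∂μ ≤ cS * σ ^ 2 * r / n := by
  obtain ⟨h1, h2, h3, h4⟩ := hdag
  -- injectivity of GS.mulVecLin from full column rank
  have hinj : Function.Injective GS.mulVecLin := by
    rw [← LinearMap.ker_eq_bot]
    have hrn := GS.mulVecLin.finrank_range_add_finrank_ker
    rw [Matrix.rank] at hrankGS
    rw [hrankGS] at hrn
    simp only [Module.finrank_pi, Fintype.card_fin] at hrn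
    have h0 : Module.finrank ℝ (LinearMap.ker GS.mulVecLin) = 0 := by omega
    exact Submodule.finrank_eq_zero.mp h0
  -- C := GSᵀ * GS is positive definite
  set C : Matrix (Fin r) (Fin r) ℝ := GSᵀ * GS with hC
  have hCpd : C.PosDef := by
    refine Matrix.PosDef.of_dotProduct_mulVec_pos ?_ ?_
    · simpa using Matrix.isHermitian_conjTranspose_mul_self GS
    · intro x hx
      have hxv : GS.mulVec x ≠ 0 := fun h => hx (hinj (by simpa using h))
      have hcomp : (star x) ⬝ᵥ (C *ᵥ x) = (GS *ᵥ x) ⬝ᵥ (GS *ᵥ x) := by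
        rw [hC, ← Matrix.mulVec_mulVec, Matrix.dotProduct_mulVec, star_trivial,
          Matrix.vecMul_transpose]
      rw [hcomp]
      exact lt_of_le_of_ne (Finset.sum_nonneg fun j _ => mul_self_nonneg _)
        (Ne.symm (fun h => hxv (dotProduct_self_eq_zero.mp h)))
  have hCdet : IsUnit C.det := isUnit_iff_ne_zero.mpr hCpd.det_pos.ne'
  have hCinv : C⁻¹ * C = 1 := Matrix.nonsing_inv_mul C hCdet
  have hCinv' : C * C⁻¹ = 1 := Matrix.mul_nonsing_inv C hCdet
  -- SgS is positive definite and its inverse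
  have hnR : (n : ℝ) ≠ 0 := Nat.cast_ne_zero.mpr hn.ne'
  have hSgSpd : SgS.PosDef := by
    rw [hSgS]
    refine Matrix.PosDef.of_dotProduct_mulVec_pos ?_ ?_
    · show ((n : ℝ)⁻¹ • C)ᴴ = _
      rw [Matrix.conjTranspose_smul, star_trivial, hCpd.1.eq]
    · intro x hx
      rw [Matrix.smul_mulVec, dotProduct_smul, smul_eq_mul]
      exact mul_pos (by positivity) (hCpd.dotProduct_mulVec_pos hx)
  have hSgSinv : SgS⁻¹ = (n : ℝ) • C⁻¹ := by
    apply Matrix.inv_eq_right_inv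
    rw [hSgS, Matrix.smul_mul, Matrix.mul_smul, smul_smul, inv_mul_cancel₀ hnR, one_smul, hCinv']
  -- Part 1
  have hpart1 : (Sg * SgS⁻¹).trace ≤ cS * r := by
    have hnn : 0 ≤ ((cS • SgS - Sg) * SgS⁻¹).trace :=
      aux_trace_mul_nonneg hmm hSgSpd.inv.posSemidef
    have hexp : (cS • SgS - Sg) * SgS⁻¹ = cS • (1 : Matrix (Fin r) (Fin r) ℝ) - Sg * SgS⁻¹ := by
      rw [Matrix.sub_mul, Matrix.smul_mul, Matrix.mul_nonsing_inv SgS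
        (isUnit_iff_ne_zero.mpr hSgSpd.det_pos.ne')]
    rw [hexp, Matrix.trace_sub, Matrix.trace_smul, Matrix.trace_one] at hnn
    simp only [Fintype.card_fin, smul_eq_mul, mul_one] at hnn
    linarith
  refine ⟨hpart1, ?_⟩
  -- Moore-Penrose consequences
  have hdagGS : GSdag * GS = 1 := by
    have h1' : GS * (GSdag * GS) = GS := by rw [← Matrix.mul_assoc, h1]
    have e1 : C * (GSdag * GS) = C := by
      rw [hC, Matrix.mul_assoc, h1']
    calc GSdag * GS = (C⁻¹ * C) * (GSdag * GS) := by rw [hCinv, Matrix.one_mul]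
      _ = C⁻¹ * (C * (GSdag * GS)) := by rw [Matrix.mul_assoc]
      _ = C⁻¹ * C := by rw [e1]
      _ = 1 := hCinv
  have hDD : GSdag * GSdagᵀ = C⁻¹ := by
    have h2' : GSdag * (GS * GSdag) = GSdag := by rw [← Matrix.mul_assoc, h2]
    have e1 : C * (GSdag * GSdagᵀ) = 1 := by
      calc C * (GSdag * GSdagᵀ)
          = GSᵀ * (GS * GSdag * GSdagᵀ) := by rw [hC]; simp only [Matrix.mul_assoc]
        _ = GSᵀ * ((GS * GSdag)ᵀ * GSdagᵀ) := by congr 1; rw [h3]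
        _ = GSᵀ * (GSdag * (GS * GSdag))ᵀ := by
              congr 1; rw [Matrix.transpose_mul GSdag (GS * GSdag)]
        _ = GSᵀ * GSdagᵀ := by rw [h2']
        _ = (GSdag * GS)ᵀ := (Matrix.transpose_mul _ _).symm
        _ = 1 := by rw [hdagGS, Matrix.transpose_one]
    calc GSdag * GSdagᵀ = (C⁻¹ * C) * (GSdag * GSdagᵀ) := by rw [hCinv, Matrix.one_mul]
      _ = C⁻¹ * (C * (GSdag * GSdagᵀ)) := by rw [Matrix.mul_assoc]
      _ = C⁻¹ := by rw [e1, Matrix.mul_one]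
  -- error vector
  have herr : ∀ ω, θS ω - θstar = GSdag *ᵥ (zS ω) := by
    intro ω
    rw [hθS ω, hy ω, Matrix.mulVec_add, Matrix.mulVec_mulVec, hdagGS, Matrix.one_mulVec]
    abel
  set A : Matrix (Fin N) (Fin n) ℝ := G * GSdag with hA
  have hGz : ∀ ω, G *ᵥ (θS ω - θstar) = A *ᵥ (zS ω) := by
    intro ω
    rw [herr ω, Matrix.mulVec_mulVec]
  -- rewrite the integrand as a finite sum
  have hf : ∀ ω, (N : ℝ)⁻¹ * ∑ i, (G.mulVec (θS ω - θstar) i) ^ 2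
      = ∑ p : Fin N × Fin n × Fin n,
          ((N : ℝ)⁻¹ * (A p.1 p.2.1 * A p.1 p.2.2)) * (zS ω p.2.1 * zS ω p.2.2) := by
    intro ω
    rw [hGz ω]
    rw [Fintype.sum_prod_type]
    rw [Finset.mul_sum]
    refine Finset.sum_congr rfl fun i _ => ?_
    rw [Fintype.sum_prod_type]
    have hexp : (A *ᵥ zS ω) i ^ 2 = ∑ j, ∑ k, (A i j * zS ω j) * (A i k * zS ω k) := by
      rw [show (A *ᵥ zS ω) i = ∑ j, A i j * zS ω j from rfl, pow_two, Finset.sum_mul_sum]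
    rw [hexp, Finset.mul_sum]
    refine Finset.sum_congr rfl fun j _ => ?_
    rw [Finset.mul_sum]
    refine Finset.sum_congr rfl fun k _ => ?_
    ring
  -- compute the integral
  have hintegral : ∫ ω, (N : ℝ)⁻¹ * ∑ i, (G.mulVec (θS ω - θstar) i) ^ 2 ∂μ
      = ∑ p : Fin N × Fin n × Fin n,
          ((N : ℝ)⁻¹ * (A p.1 p.2.1 * A p.1 p.2.2)) * (if p.2.1 = p.2.2 then σ ^ 2 else 0) := by
    rw [integral_congr_ae (Filter.Eventually.of_forall hf)]
    rw [integral_finset_sum _ (fun p _ => (hint p.2.1 p.2.2).const_mul _)]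
    refine Finset.sum_congr rfl fun p _ => ?_
    rw [integral_const_mul, hcov]
  rw [hintegral]
  -- evaluate the sum
  have hsum : ∑ p : Fin N × Fin n × Fin n,
      ((N : ℝ)⁻¹ * (A p.1 p.2.1 * A p.1 p.2.2)) * (if p.2.1 = p.2.2 then σ ^ 2 else 0)
      = σ ^ 2 * ((N : ℝ)⁻¹ * ∑ i, ∑ j, A i j * A i j) := by
    simp only [Fintype.sum_prod_type, mul_ite, mul_zero, Finset.sum_ite_eq, Finset.mem_univ,
      if_true, Finset.mul_sum]
    refine Finset.sum_congr rfl fun i _ => Finset.sum_congr rfl fun j _ => by ring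
  rw [hsum]
  -- relate the double sum to the trace
  have htr : (N : ℝ)⁻¹ * ∑ i, ∑ j, A i j * A i j = (n : ℝ)⁻¹ * (Sg * SgS⁻¹).trace := by
    have h5 : ∑ i, ∑ j, A i j * A i j = (Aᵀ * A).trace := by
      rw [Matrix.trace, Finset.sum_comm]
      refine Finset.sum_congr rfl fun j _ => ?_
      simp [Matrix.diag, Matrix.mul_apply, Matrix.transpose_apply]
    have h6 : Aᵀ * A = GSdagᵀ * (Gᵀ * G) * GSdag := by
      rw [hA, Matrix.transpose_mul]
      rw [Matrix.mul_assoc, Matrix.mul_assoc, Matrix.mul_assoc]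
    have h7 : (Aᵀ * A).trace = ((Gᵀ * G) * C⁻¹).trace := by
      rw [h6, Matrix.trace_mul_cycle, hDD, Matrix.trace_mul_comm]
    have h8 : Sg * SgS⁻¹ = ((N : ℝ)⁻¹ * n) • ((Gᵀ * G) * C⁻¹) := by
      rw [hSg, hSgSinv, Matrix.smul_mul, Matrix.mul_smul, smul_smul]
    rw [h5, h7, h8, Matrix.trace_smul]
    simp only [smul_eq_mul]
    field_simp
  rw [htr]
  -- conclude
  have hb : σ ^ 2 * ((n : ℝ)⁻¹ * (Sg * SgS⁻¹).trace) ≤ σ ^ 2 * ((n : ℝ)⁻¹ * (cS * r)) := by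
    have hσ : (0:ℝ) ≤ σ ^ 2 := sq_nonneg σ
    have hni : (0:ℝ) ≤ (n : ℝ)⁻¹ := by positivity
    nlinarith [mul_le_mul_of_nonneg_left hpart1 hni]
  calc σ ^ 2 * ((n : ℝ)⁻¹ * (Sg * SgS⁻¹).trace) ≤ σ ^ 2 * ((n : ℝ)⁻¹ * (cS * r)) := hb
    _ = cS * σ ^ 2 * r / n := by field_simp
end

section
/- Let A, B ∈ R^{r×r} be symmetric positive semidefinite, let P ∈ R^{r×r} be an orthogonal projector, and let c > 0 satisfy P A P ≼ c · P B P in the Loewner order. Then tr( A (P B P)^† ) ≤ c · rank(P B P) ≤ c · rank(P). -/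
open Matrix

section helpers
variable {n : ℕ}
open scoped MatrixOrder

lemma posSemidef_of_eq_conjTranspose_mul_self {M : Matrix (Fin n) (Fin n) ℝ}
    (h : ∃ S : Matrix (Fin n) (Fin n) ℝ, M = Sᴴ * S) : M.PosSemidef := by
  obtain ⟨S, rfl⟩ := h
  exact posSemidef_conjTranspose_mul_self S

lemma trace_nonneg_of_psd {M : Matrix (Fin n) (Fin n) ℝ} (hM : M.PosSemidef) :
    0 ≤ M.trace := by
  refine Finset.sum_nonneg fun i _ => ?_
  have h := hM.dotProduct_mulVec_nonneg (Pi.single i 1)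
  simpa [dotProduct, mulVec, Pi.single_apply, Finset.sum_ite_eq] using h

lemma trace_mul_nonneg_of_psd {X Y : Matrix (Fin n) (Fin n) ℝ}
    (hX : X.PosSemidef) (hY : Y.PosSemidef) : 0 ≤ (X * Y).trace := by
  have h1 : (X * Y).trace = (CFC.sqrt X * Y * CFC.sqrt X).trace := by
    rw [trace_mul_cycle, CFC.sqrt_mul_sqrt_self X hX.nonneg]
  rw [h1]
  have h2 := hY.mul_mul_conjTranspose_same (CFC.sqrt X)
  rw [(CFC.sqrt_nonneg X).posSemidef.isHermitian] at h2
  exact trace_nonneg_of_psd h2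

lemma trace_eq_rank_of_proj {Q : Matrix (Fin n) (Fin n) ℝ}
    (hQ : Q.IsHermitian) (h2 : Q * Q = Q) : Q.trace = (Q.rank : ℝ) := by
  classical
  set U : Matrix (Fin n) (Fin n) ℝ := (hQ.eigenvectorUnitary : Matrix (Fin n) (Fin n) ℝ) with hUdef
  set V : Matrix (Fin n) (Fin n) ℝ := star U with hVdef
  have hUV : U * V = 1 := Unitary.coe_mul_star_self _
  have hdiag : V * Q * U = diagonal (RCLike.ofReal ∘ hQ.eigenvalues) :=
    by have h := hQ.conjStarAlgAut_star_eigenvectorUnitary; simpa [V, U] using h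
  rw [RCLike.ofReal_real_eq_id] at hdiag
  have hcomp : (id ∘ hQ.eigenvalues) = hQ.eigenvalues := rfl
  rw [hcomp] at hdiag
  have hEE : diagonal hQ.eigenvalues * diagonal hQ.eigenvalues = diagonal hQ.eigenvalues := by
    rw [← hdiag]
    calc (V * Q * U) * (V * Q * U) = V * (Q * ((U * V) * (Q * U))) := by
          simp only [mul_assoc]
      _ = V * (Q * (Q * U)) := by rw [hUV, one_mul]
      _ = V * Q * U := by rw [← mul_assoc Q Q U, h2, ← mul_assoc]
  have heig : ∀ i, hQ.eigenvalues i = 0 ∨ hQ.eigenvalues i = 1 := by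
    intro i
    have := congrFun (congrFun hEE i) i
    rw [diagonal_mul_diagonal, diagonal_apply_eq, diagonal_apply_eq] at this
    rcases mul_eq_zero.mp (by linarith : hQ.eigenvalues i * (hQ.eigenvalues i - 1) = 0) with h | h
    · exact Or.inl h
    · exact Or.inr (by linarith)
  have htr : Q.trace = ∑ i, hQ.eigenvalues i := by
    have : Q.trace = (V * Q * U).trace := by
      rw [mul_assoc, trace_mul_comm, mul_assoc, hUV, mul_one]
    rw [this, hdiag, trace_diagonal]
  have hsum : ∑ i, hQ.eigenvalues i = ∑ i, (if hQ.eigenvalues i ≠ 0 then (1:ℝ) else 0) := by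
    refine Finset.sum_congr rfl fun i _ => ?_
    rcases heig i with h | h <;> simp [h]
  rw [htr, hsum, Finset.sum_boole, hQ.rank_eq_card_non_zero_eigs,
    Fintype.card_subtype]

lemma mp_unique {M D E : Matrix (Fin n) (Fin n) ℝ}
    (hD : IsMoorePenrose M D) (hE : IsMoorePenrose M E) : D = E := by
  obtain ⟨hD1, hD2, hD3, hD4⟩ := hD
  obtain ⟨hE1, hE2, hE3, hE4⟩ := hE
  have hMD : M * D = M * E := by
    calc M * D = (M * D)ᵀ := hD3.symm
      _ = Dᵀ * Mᵀ := transpose_mul _ _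
      _ = Dᵀ * (M * E * M)ᵀ := by rw [hE1]
      _ = Dᵀ * (Mᵀ * (M * E)ᵀ) := by rw [transpose_mul (M * E) M]
      _ = (Dᵀ * Mᵀ) * (M * E)ᵀ := by rw [mul_assoc]
      _ = (M * D)ᵀ * (M * E) := by rw [← transpose_mul, hE3]
      _ = (M * D) * (M * E) := by rw [hD3]
      _ = (M * D * M) * E := by simp only [mul_assoc]
      _ = M * E := by rw [hD1]
  have hDM : D * M = E * M := by
    calc D * M = (D * M)ᵀ := hD4.symm
      _ = Mᵀ * Dᵀ := transpose_mul _ _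
      _ = (M * E * M)ᵀ * Dᵀ := by rw [hE1]
      _ = (Mᵀ * (M * E)ᵀ) * Dᵀ := by rw [transpose_mul (M * E) M]
      _ = (E * M)ᵀ * (D * M)ᵀ := by simp only [transpose_mul, mul_assoc]
      _ = (E * M) * (D * M) := by rw [hE4, hD4]
      _ = E * (M * D * M) := by simp only [mul_assoc]
      _ = E * M := by rw [hD1]
  calc D = D * M * D := hD2.symm
    _ = D * (M * E) := by rw [mul_assoc, hMD]
    _ = (D * M) * E := by rw [mul_assoc]
    _ = (E * M) * E := by rw [hDM]
    _ = E := hE2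

end helpers

/-- if `P A P ≼ c P B P` then `tr(A (P B P)†) ≤ c rank(P B P) ≤ c rank(P)`. -/
theorem stmt11 {r : ℕ}
    (A B : Matrix (Fin r) (Fin r) ℝ) (hA : A.PosSemidef) (hB : B.PosSemidef)
    (P : Matrix (Fin r) (Fin r) ℝ) (hPproj : P * P = P) (hPsymm : Pᵀ = P)
    (c : ℝ) (hc : 0 < c)
    (hmm : (c • (P * B * P) - P * A * P).PosSemidef)
    (D : Matrix (Fin r) (Fin r) ℝ) (hD : IsMoorePenrose (P * B * P) D) :
    (A * D).trace ≤ c * ((P * B * P).rank : ℝ) ∧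
    c * ((P * B * P).rank : ℝ) ≤ c * (P.rank : ℝ) := by
  set M : Matrix (Fin r) (Fin r) ℝ := P * B * P with hMdef
  obtain ⟨h1, h2, h3, h4⟩ := hD
  have hBt : Bᵀ = B := by rw [← conjTranspose_eq_transpose_of_trivial]; exact hB.isHermitian
  have hMsym : Mᵀ = M := by
    rw [hMdef]; simp only [transpose_mul, hPsymm, hBt, mul_assoc]
  have hM : M.PosSemidef := by
    have h := hB.conjTranspose_mul_mul_same P
    rwa [conjTranspose_eq_transpose_of_trivial, hPsymm] at h
  have hMP : M * P = M := by
    rw [hMdef, mul_assoc (P * B) P P, hPproj]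
  have hDT : IsMoorePenrose M Dᵀ := by
    refine ⟨?_, ?_, ?_, ?_⟩
    · have h := congrArg Matrix.transpose h1
      simp only [transpose_mul, hMsym] at h
      rw [mul_assoc]; exact h
    · have h := congrArg Matrix.transpose h2
      simp only [transpose_mul, hMsym] at h
      rw [mul_assoc]; exact h
    · rw [transpose_mul, transpose_transpose, hMsym, ← h4, transpose_mul, hMsym]
    · rw [transpose_mul, transpose_transpose, hMsym, ← h3, transpose_mul, hMsym]
  have hDsym : Dᵀ = D := mp_unique hDT ⟨h1, h2, h3, h4⟩
  have hcomm : M * D = D * M := by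
    calc M * D = (M * D)ᵀ := h3.symm
      _ = Dᵀ * Mᵀ := transpose_mul _ _
      _ = D * M := by rw [hDsym, hMsym]
  have hDP2 : D * P = D := by
    calc D * P = (D * M * D) * P := by rw [h2]
      _ = (D * (D * M)) * P := by rw [mul_assoc D M D, hcomm]
      _ = D * D * (M * P) := by simp only [mul_assoc]
      _ = D * D * M := by rw [hMP]
      _ = D * (M * D) := by rw [mul_assoc, hcomm]
      _ = D := by rw [← mul_assoc, h2]
  have hPD : P * D = D := by
    have h := congrArg Matrix.transpose hDP2
    simpa [transpose_mul, hPsymm, hDsym] using h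
  have hPDP : P * D * P = D := by rw [hPD, hDP2]
  have hDH : Dᴴ = D := by rw [conjTranspose_eq_transpose_of_trivial, hDsym]
  have hD_psd : D.PosSemidef := by
    open scoped MatrixOrder in
    refine posSemidef_of_eq_conjTranspose_mul_self ⟨CFC.sqrt M * D, ?_⟩
    calc D = D * M * D := h2.symm
      _ = D * (CFC.sqrt M * CFC.sqrt M) * D := by rw [CFC.sqrt_mul_sqrt_self M hM.nonneg]
      _ = (CFC.sqrt M * D)ᴴ * (CFC.sqrt M * D) := by
          rw [conjTranspose_mul, hDH, (CFC.sqrt_nonneg M).posSemidef.isHermitian]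
          simp only [mul_assoc]
  have hPA : (P * A * P).PosSemidef := by
    have h := hA.conjTranspose_mul_mul_same P
    rwa [conjTranspose_eq_transpose_of_trivial, hPsymm] at h
  have htr1 : (A * D).trace = (P * A * P * D).trace := by
    conv_lhs => rw [← hPDP]
    rw [show A * (P * D * P) = (A * P * D) * P from by simp only [mul_assoc],
      trace_mul_comm, show P * (A * P * D) = P * A * P * D from by simp only [mul_assoc]]
  have h7 : 0 ≤ ((c • M - P * A * P) * D).trace := trace_mul_nonneg_of_psd hmm hD_psd
  have h8 : ((c • M - P * A * P) * D).trace = c * (M * D).trace - (P * A * P * D).trace := by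
    rw [sub_mul, trace_sub, smul_mul_assoc, trace_smul, smul_eq_mul]
  have hQH : (M * D).IsHermitian := by
    show (M * D)ᴴ = M * D
    rw [conjTranspose_eq_transpose_of_trivial]; exact h3
  have hQ2 : (M * D) * (M * D) = M * D := by
    rw [show (M * D) * (M * D) = (M * D * M) * D from by simp only [mul_assoc], h1]
  have hrk : (M * D).rank = M.rank := by
    refine le_antisymm (rank_mul_le_left M D) ?_
    have h9 := rank_mul_le_left (M * D) M
    rwa [h1] at h9
  have htrMD : (M * D).trace = (M.rank : ℝ) := by
    rw [trace_eq_rank_of_proj hQH hQ2, hrk]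
  constructor
  · rw [htr1]
    have : (P * A * P * D).trace ≤ c * (M * D).trace := by linarith
    rw [htrMD] at this
    exact this
  · have hr : M.rank ≤ P.rank := by
      rw [hMdef]; exact rank_mul_le_right (P * B) P
    exact mul_le_mul_of_nonneg_left (Nat.cast_le.mpr hr) hc.le
end
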